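/- Let G be a group, K a normal subgroup of G with generating sets S and S', and H a subgroup of G containing K. Then the commutator subgroup K' equals the normal closure in H (i.e., the subgroup generated by H-conjugates) of the set of commutators [s,s'] with s ∈ S, s' ∈ S'. -/

import Mathlib

open scoped commutatorElement

/-- If `K` is a normal subgroup of `G` with generating sets `S`, `S'`,
and `H` is a subgroup of `G` containing `K`, then the commutator subgroup `K'`
equals the subgroup generated by the `H`-conjugates of the commutators `⁅s,s'⁆`,
`s ∈ S`, `s' ∈ S'`. -/
theorem stmt_1 {G : Type*} [Group G] (K H : Subgroup G) [K.Normal] (hKH : K ≤ H)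
    (S S' : Set G) (hS : Subgroup.closure S = K) (hS' : Subgroup.closure S' = K) :
    ⁅K, K⁆ =
      Subgroup.closure {g : G | ∃ h ∈ H, ∃ s ∈ S, ∃ s' ∈ S', g = h * ⁅s, s'⁆ * h⁻¹} := by
  set T : Set G := {g : G | ∃ h ∈ H, ∃ s ∈ S, ∃ s' ∈ S', g = h * ⁅s, s'⁆ * h⁻¹} with hT
  set N : Subgroup G := Subgroup.closure T with hN
  have hSK : S ⊆ (K : Set G) := hS ▸ Subgroup.subset_closure
  have hS'K : S' ⊆ (K : Set G) := hS' ▸ Subgroup.subset_closure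
  -- N is normalized by H
  have hconj : ∀ h ∈ H, ∀ n ∈ N, h * n * h⁻¹ ∈ N := by
    intro h hh n hn
    induction hn using Subgroup.closure_induction with
    | mem x hx =>
      obtain ⟨h', hh', s, hs, s', hs', rfl⟩ := hx
      exact Subgroup.subset_closure ⟨h * h', H.mul_mem hh hh', s, hs, s', hs', by group⟩
    | one => simpa using N.one_mem
    | mul x y hx hy px py =>
      have e : h * (x * y) * h⁻¹ = (h * x * h⁻¹) * (h * y * h⁻¹) := by group
      rw [e]; exact N.mul_mem px py
    | inv x hx px =>
      have e : h * x⁻¹ * h⁻¹ = (h * x * h⁻¹)⁻¹ := by group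
      rw [e]; exact N.inv_mem px
  apply le_antisymm
  · rw [Subgroup.commutator_le]
    -- Step 1: for s ∈ S and y ∈ K, ⁅s, y⁆ ∈ N
    have step1 : ∀ s ∈ S, ∀ y ∈ K, ⁅s, y⁆ ∈ N := by
      intro s hs y hy
      rw [← hS'] at hy
      induction hy using Subgroup.closure_induction with
      | mem y hy =>
        exact Subgroup.subset_closure ⟨1, H.one_mem, s, hs, y, hy, by group⟩
      | one => simpa [commutatorElement_def] using N.one_mem
      | mul y z hy hz py pz =>
        have hyH : y ∈ H := hKH (hS' ▸ hy)
        have e : ⁅s, y * z⁆ = ⁅s, y⁆ * (y * ⁅s, z⁆ * y⁻¹) := by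
          simp only [commutatorElement_def]; group
        rw [e]; exact N.mul_mem py (hconj y hyH _ pz)
      | inv y hy py =>
        have hyH : y⁻¹ ∈ H := H.inv_mem (hKH (hS' ▸ hy))
        have e : ⁅s, y⁻¹⁆ = y⁻¹ * ⁅s, y⁆⁻¹ * (y⁻¹)⁻¹ := by
          simp only [commutatorElement_def]; group
        rw [e]; exact hconj y⁻¹ hyH _ (N.inv_mem py)
    -- Step 2: for x ∈ K and y ∈ K, ⁅x, y⁆ ∈ N
    intro x hx y hy
    have hx' : x ∈ Subgroup.closure S := hS ▸ hx
    induction hx' using Subgroup.closure_induction with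
    | mem x hxS => exact step1 x hxS y hy
    | one => simpa [commutatorElement_def] using N.one_mem
    | mul a b ha hb pa pb =>
      have haH : a ∈ H := hKH (hS ▸ ha)
      have e : ⁅a * b, y⁆ = (a * ⁅b, y⁆ * a⁻¹) * ⁅a, y⁆ := by
        simp only [commutatorElement_def]; group
      rw [e]; exact N.mul_mem (hconj a haH _ (pb (hS ▸ hb))) (pa (hS ▸ ha))
    | inv a ha pa =>
      have haH : a⁻¹ ∈ H := H.inv_mem (hKH (hS ▸ ha))
      have e : ⁅a⁻¹, y⁆ = a⁻¹ * ⁅a, y⁆⁻¹ * (a⁻¹)⁻¹ := by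
        simp only [commutatorElement_def]; group
      rw [e]; exact hconj a⁻¹ haH _ (N.inv_mem (pa (hS ▸ ha)))
  · rw [Subgroup.closure_le]
    rintro g ⟨h, hh, s, hs, s', hs', rfl⟩
    have hm : ⁅s, s'⁆ ∈ ⁅K, K⁆ := Subgroup.commutator_mem_commutator (hSK hs) (hS'K hs')
    exact (Subgroup.commutator_normal K K).conj_mem _ hm h
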